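/- Let q be a prime power and n ≥ 1. Then the number of nonzero vectors v = (v_1, ..., v_n) ∈ (𝔽_{q²})^n satisfying v_1^(q+1) + v_2^(q+1) + ... + v_n^(q+1) = 0 is (q^n − (−1)^n)·(q^(n−1) + (−1)^n). -/

import Mathlib

open Finset

section HermAux

variable {K : Type*} [Field K] [Fintype K]

lemma herm_exists_root (q : ℕ) (hq2 : 2 ≤ q) (hcard : Fintype.card K = q ^ 2)
    {c : K} (hc0 : c ≠ 0) (hc : c ^ q = c) : ∃ α : K, α ^ (q + 1) = c := by
  classical
  obtain ⟨g, hg⟩ := IsCyclic.exists_generator (α := Kˣ)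
  have horder : orderOf g = (q + 1) * (q - 1) := by
    rw [orderOf_eq_card_of_forall_mem_zpowers hg, Nat.card_eq_fintype_card,
      Fintype.card_units, hcard]
    apply Nat.sub_eq_of_eq_add
    obtain ⟨r, rfl⟩ : ∃ r, q = r + 1 := ⟨q - 1, by omega⟩
    simp only [Nat.add_sub_cancel]
    ring
  set u : Kˣ := Units.mk0 c hc0 with hu
  obtain ⟨m, hm0⟩ := mem_powers_iff_mem_zpowers.2 (hg u)
  have hm : g ^ m = u := hm0
  have huq : u ^ (q - 1) = 1 := by
    have h1 : u ^ q = u := Units.ext (by rw [Units.val_pow_eq_pow_val]; exact hc)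
    have h2 : u ^ (q - 1) * u = 1 * u := by
      rw [one_mul, ← pow_succ, Nat.sub_add_cancel (by omega), h1]
    exact mul_right_cancel h2
  have hdvd : (q + 1) * (q - 1) ∣ m * (q - 1) := by
    have h3 : g ^ (m * (q - 1)) = 1 := by rw [pow_mul, hm, huq]
    have h4 := orderOf_dvd_of_pow_eq_one h3
    rwa [horder] at h4
  have hdvd' : (q + 1) ∣ m := (Nat.mul_dvd_mul_iff_right (by omega : 0 < q - 1)).1 hdvd
  obtain ⟨t, rfl⟩ := hdvd'
  clear hm0
  refine ⟨((g ^ t : Kˣ) : K), ?_⟩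
  have h5 : (g ^ t) ^ (q + 1) = u := by rw [← pow_mul, mul_comm t (q + 1), hm]
  rw [← Units.val_pow_eq_pow_val, h5]
  rfl

lemma herm_prim (q : ℕ) (hq2 : 2 ≤ q) (hcard : Fintype.card K = q ^ 2) :
    ∃ ζ : K, IsPrimitiveRoot ζ (q + 1) := by
  classical
  obtain ⟨g, hg⟩ := IsCyclic.exists_generator (α := Kˣ)
  have horder : orderOf g = (q + 1) * (q - 1) := by
    rw [orderOf_eq_card_of_forall_mem_zpowers hg, Nat.card_eq_fintype_card,
      Fintype.card_units, hcard]
    apply Nat.sub_eq_of_eq_add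
    obtain ⟨r, rfl⟩ : ∃ r, q = r + 1 := ⟨q - 1, by omega⟩
    simp only [Nat.add_sub_cancel]
    ring
  have h : orderOf (g ^ (q - 1)) = q + 1 := by
    rw [orderOf_pow, horder, Nat.gcd_eq_right ⟨q + 1, by ring⟩,
      Nat.mul_div_cancel _ (by omega : 0 < q - 1)]
  refine ⟨((g ^ (q - 1) : Kˣ) : K), ?_⟩
  rw [IsPrimitiveRoot.coe_units_iff]
  exact h ▸ IsPrimitiveRoot.orderOf _

lemma herm_fiber [DecidableEq K] (q : ℕ) (hq2 : 2 ≤ q) (hcard : Fintype.card K = q ^ 2)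
    {c : K} (hc0 : c ≠ 0) (hc : c ^ q = c) :
    (univ.filter fun x : K => x ^ (q + 1) = c).card = q + 1 := by
  classical
  obtain ⟨α, hα⟩ := herm_exists_root q hq2 hcard hc0 hc
  obtain ⟨ζ, hζ⟩ := herm_prim (K := K) q hq2 hcard
  have hα0 : α ≠ 0 := by
    rintro rfl
    rw [zero_pow (by omega)] at hα
    exact hc0 hα.symm
  have himg : (univ.filter fun x : K => x ^ (q + 1) = c)
      = (Polynomial.nthRootsFinset (q + 1) (1 : K)).image (· * α) := by
    ext x
    simp only [mem_filter, mem_univ, true_and, mem_image,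
      Polynomial.mem_nthRootsFinset (by omega : 0 < q + 1)]
    constructor
    · intro hx
      refine ⟨x * α⁻¹, ?_, by field_simp⟩
      rw [mul_pow, hx, inv_pow, hα, mul_inv_cancel₀ hc0]
    · rintro ⟨y, hy, rfl⟩
      rw [mul_pow, hy, one_mul, hα]
  rw [himg, Finset.card_image_of_injective _ (mul_left_injective₀ hα0),
    hζ.card_nthRootsFinset]

lemma herm_pow_fixed (q : ℕ) (_hq2 : 2 ≤ q) (hcard : Fintype.card K = q ^ 2) (x : K) :
    (x ^ (q + 1)) ^ q = x ^ (q + 1) := by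
  rw [← pow_mul, (by ring : (q + 1) * q = q ^ 2 + q), pow_add, ← hcard,
    FiniteField.pow_card]
  exact (pow_succ' x q).symm

lemma herm_sum_fixed (q : ℕ) (hq : IsPrimePow q) (hcard : Fintype.card K = q ^ 2)
    {n : ℕ} (v : Fin n → K) :
    (-∑ i, v i ^ (q + 1)) ^ q = -∑ i, v i ^ (q + 1) := by
  obtain ⟨p, k, hp, hk, rfl⟩ := hq
  have hp' : Nat.Prime p := hp.nat_prime
  haveI : Fact p.Prime := ⟨hp'⟩
  have hq2 : 2 ≤ p ^ k := by
    calc 2 = 2 ^ 1 := rfl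
    _ ≤ p ^ k := Nat.pow_le_pow_left hp'.two_le k |>.trans' (by
        exact Nat.pow_le_pow_right (by omega) hk) |>.trans (le_refl _)
  -- get CharP K p
  have hpr : ringChar K = p := by
    obtain ⟨n', hn'1, hn'2⟩ := FiniteField.card K (ringChar K)
    have hdp : p ∣ ringChar K ^ (n' : ℕ) := by
      rw [← hn'2, hcard, ← pow_mul]
      exact dvd_pow_self p (by omega)
    exact ((Nat.prime_dvd_prime_iff_eq hp' hn'1).1 (hp'.dvd_of_dvd_pow hdp)).symm
  haveI : CharP K p := hpr ▸ ringChar.charP K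
  have hmap := map_sum (iterateFrobenius K p k) (fun i => v i ^ (p ^ k + 1)) univ
  have hneg := map_neg (iterateFrobenius K p k) (∑ i, v i ^ (p ^ k + 1))
  simp only [iterateFrobenius_def] at hmap hneg
  rw [hneg, hmap]
  congr 1
  exact Finset.sum_congr rfl fun i _ => herm_pow_fixed (p ^ k) hq2 hcard (v i)

lemma herm_count [DecidableEq K] (q : ℕ) (hq : IsPrimePow q) (hcard : Fintype.card K = q ^ 2) (m : ℕ) :
    ((univ.filter fun v : Fin (m + 1) → K => ∑ i, v i ^ (q + 1) = 0).card : ℤ)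
      = (q : ℤ) ^ (2 * m + 1) + (-1) ^ (m + 1) * (q : ℤ) ^ m * ((q : ℤ) - 1) := by
  classical
  have hq2 : 2 ≤ q := hq.two_le
  induction m with
  | zero =>
    have h1 : (univ.filter fun v : Fin 1 → K => ∑ i, v i ^ (q + 1) = 0) = {0} := by
      ext v
      simp only [mem_filter, mem_univ, true_and, Fin.sum_univ_one, mem_singleton,
        pow_eq_zero_iff (by omega : q + 1 ≠ 0), funext_iff]
      constructor
      · intro h i
        exact Fin.cases h (fun i => i.elim0) i
      · intro h; exact h 0
    rw [h1, card_singleton]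
    push_cast
    ring
  | succ n ih =>
    -- fiberwise decomposition
    have hcd : ((univ.filter fun v : Fin (n + 1 + 1) → K => ∑ i, v i ^ (q + 1) = 0).card)
        = ∑ w : Fin (n + 1) → K, (univ.filter fun x : K =>
            x ^ (q + 1) = -∑ i, w i ^ (q + 1)).card := by
      rw [Finset.card_eq_sum_card_fiberwise
        (f := fun v : Fin (n + 1 + 1) → K => Fin.tail v) (t := univ) (fun _ _ => mem_univ _)]
      refine Finset.sum_congr rfl fun w _ => ?_
      refine Finset.card_bij' (fun v _ => v 0) (fun x _ => Fin.cons x w) ?_ ?_ ?_ ?_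
      · intro v hv
        simp only [mem_filter, mem_univ, true_and] at hv ⊢
        obtain ⟨h1, h2⟩ := hv
        rw [Fin.sum_univ_succ] at h1
        have : ∀ i : Fin (n + 1), v i.succ = w i := fun i => by rw [← h2]; rfl
        simp only [this] at h1
        exact eq_neg_of_add_eq_zero_left h1
      · intro x hx
        simp only [mem_filter, mem_univ, true_and] at hx ⊢
        constructor
        · rw [Fin.sum_univ_succ]
          simp only [Fin.cons_zero, Fin.cons_succ, hx]
          ring
        · funext i
          simp [Fin.tail]
      · intro v hv
        simp only [mem_filter, mem_univ, true_and] at hv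
        obtain ⟨h1, h2⟩ := hv
        subst h2
        exact Fin.cons_self_tail v
      · intro x hx
        simp
    have hfib : ∀ w : Fin (n + 1) → K,
        (univ.filter fun x : K => x ^ (q + 1) = -∑ i, w i ^ (q + 1)).card
          = if (∑ i, w i ^ (q + 1)) = 0 then 1 else q + 1 := by
      intro w
      by_cases h : (∑ i, w i ^ (q + 1)) = 0
      · rw [if_pos h]
        have h2 : (univ.filter fun x : K => x ^ (q + 1) = -∑ i, w i ^ (q + 1)) = {0} := by
          ext x
          simp only [mem_filter, mem_univ, true_and, h, neg_zero, mem_singleton]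
          exact pow_eq_zero_iff (Nat.succ_ne_zero q)
        rw [h2, card_singleton]
      · rw [if_neg h]
        exact herm_fiber q hq2 hcard (neg_ne_zero.2 h) (herm_sum_fixed q hq hcard w)
    have hle : (univ.filter fun w : Fin (n + 1) → K => ∑ i, w i ^ (q + 1) = 0).card
        ≤ (q ^ 2) ^ (n + 1) := by
      calc _ ≤ (univ : Finset (Fin (n + 1) → K)).card := card_filter_le _ _
      _ = (q ^ 2) ^ (n + 1) := by
          rw [card_univ, Fintype.card_fun, hcard, Fintype.card_fin]
    have hsplit : ∑ w : Fin (n + 1) → K,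
        (if (∑ i, w i ^ (q + 1)) = 0 then 1 else q + 1)
        = (univ.filter fun w : Fin (n + 1) → K => ∑ i, w i ^ (q + 1) = 0).card * 1
          + ((q ^ 2) ^ (n + 1)
             - (univ.filter fun w : Fin (n + 1) → K => ∑ i, w i ^ (q + 1) = 0).card)
            * (q + 1) := by
      rw [Finset.sum_ite, Finset.sum_const, Finset.sum_const, smul_eq_mul, smul_eq_mul]
      have h9 := Finset.card_filter_add_card_filter_not
        (s := (univ : Finset (Fin (n + 1) → K)))
        (fun w => ∑ i, w i ^ (q + 1) = 0)
      rw [card_univ, Fintype.card_fun, hcard, Fintype.card_fin] at h9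
      rw [Nat.eq_sub_of_add_eq' h9]
    rw [hcd]
    simp only [hfib]
    rw [hsplit]
    push_cast [Nat.cast_sub hle]
    linear_combination (-(q : ℤ)) * ih

end HermAux

/-- The number of nonzero isotropic vectors of the standard hermitian form on
`(𝔽_{q²})^n`, i.e. nonzero `v` with `v₁^(q+1) + ⋯ + v_n^(q+1) = 0`, is
`(q^n − (−1)^n)·(q^(n−1) + (−1)^n)`. -/
theorem count_singular_vectors_hermitian
    {K : Type*} [Field K] [Fintype K]
    (q : ℕ) (hq : IsPrimePow q) (hcard : Fintype.card K = q ^ 2)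
    (n : ℕ) (hn : 1 ≤ n) :
    (Nat.card {v : Fin n → K // v ≠ 0 ∧ ∑ i, (v i) ^ (q + 1) = 0} : ℤ) =
      ((q : ℤ) ^ n - (-1) ^ n) * ((q : ℤ) ^ (n - 1) + (-1) ^ n) := by
  classical
  obtain ⟨m, rfl⟩ : ∃ m, n = m + 1 := ⟨n - 1, by omega⟩
  have hNat : Nat.card {v : Fin (m + 1) → K // v ≠ 0 ∧ ∑ i, (v i) ^ (q + 1) = 0}
      = (univ.filter fun v : Fin (m + 1) → K => v ≠ 0 ∧ ∑ i, v i ^ (q + 1) = 0).card := by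
    rw [Nat.card_eq_fintype_card, Fintype.card_subtype]
  have hA : (univ.filter fun v : Fin (m + 1) → K => v ≠ 0 ∧ ∑ i, v i ^ (q + 1) = 0)
      = (univ.filter fun v : Fin (m + 1) → K => ∑ i, v i ^ (q + 1) = 0).erase 0 := by
    ext v
    simp only [mem_filter, mem_univ, true_and, mem_erase]
  have h0 : (0 : Fin (m + 1) → K)
      ∈ (univ.filter fun v : Fin (m + 1) → K => ∑ i, v i ^ (q + 1) = 0) := by
    simp only [mem_filter, mem_univ, true_and, Pi.zero_apply,
      zero_pow (Nat.succ_ne_zero q), Finset.sum_const_zero]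
  have hpos : 1 ≤ (univ.filter fun v : Fin (m + 1) → K => ∑ i, v i ^ (q + 1) = 0).card :=
    Finset.card_pos.2 ⟨0, h0⟩
  rw [hNat, hA, Finset.card_erase_of_mem h0]
  push_cast [Nat.cast_sub hpos]
  rw [herm_count q hq hcard m]
  have h2 : ((-1 : ℤ) ^ m) * ((-1 : ℤ) ^ m) = 1 := by
    rw [← pow_add]; exact Even.neg_one_pow ⟨m, rfl⟩
  linear_combination h2
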